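/- The n-th shift graph S_{n,2} is triangle-free, and the family of shift graphs has unbounded chromatic number: χ(S_{n,2}) ≥ log₂(n). -/

import Mathlib

/-- The shift graph `S_{n,2}`: vertices are pairs `(i,j)` with `i < j ≤ n`,
and `(i,j)` is adjacent to `(i',j')` iff `j = i'` or `j' = i`. -/
def shiftGraph (n : ℕ) : SimpleGraph {p : Fin n × Fin n // p.1 < p.2} where
  Adj u v := u.1.2 = v.1.1 ∨ v.1.2 = u.1.1
  symm := ⟨by intro u v h; tauto⟩
  loopless := ⟨by
    rintro ⟨⟨i, j⟩, h⟩ (h' | h') <;> simp_all <;> exact absurd h (by simp [h', lt_irrefl])⟩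

/-- The shift graphs are triangle-free and have chromatic number at least
`log₂ n`: any proper coloring uses at least `log₂ n` colors. -/
theorem shiftGraph_triangleFree_and_chromatic (n : ℕ) :
    (shiftGraph n).CliqueFree 3 ∧
    ∀ c : ℕ, (shiftGraph n).Colorable c → Real.logb 2 n ≤ c := by
  constructor
  · intro s hs
    obtain ⟨a, b, d, hab, had, hbd, rfl⟩ := Finset.card_eq_three.mp hs.2
    have h1 : (shiftGraph n).Adj a b := hs.1 (by simp) (by simp) hab
    have h2 : (shiftGraph n).Adj a d := hs.1 (by simp) (by simp) had
    have h3 : (shiftGraph n).Adj b d := hs.1 (by simp) (by simp) hbd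
    have ha := a.2; have hb := b.2; have hd := d.2
    simp only [shiftGraph, Fin.ext_iff, Fin.lt_def] at h1 h2 h3 ha hb hd
    omega
  · intro c hc
    obtain ⟨C⟩ := hc
    classical
    let f : Fin n → Finset (Fin c) := fun i =>
      Finset.univ.filter fun col => ∃ j : Fin n, ∃ h : i < j, C ⟨(i, j), h⟩ = col
    have hinj : Function.Injective f := by
      intro i i' h
      by_contra hne
      wlog hlt : i < i' generalizing i i'
      · exact this h.symm (Ne.symm hne)
          (lt_of_le_of_ne (not_lt.mp hlt) (Ne.symm hne))
      have hmem : C ⟨(i, i'), hlt⟩ ∈ f i := by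
        simp only [f, Finset.mem_filter, Finset.mem_univ, true_and]
        exact ⟨i', hlt, rfl⟩
      rw [h] at hmem
      simp only [f, Finset.mem_filter, Finset.mem_univ, true_and] at hmem
      obtain ⟨j, hj, hcj⟩ := hmem
      have hadj : (shiftGraph n).Adj ⟨(i, i'), hlt⟩ ⟨(i', j), hj⟩ := Or.inl rfl
      exact C.valid hadj hcj.symm
    have hcard : n ≤ 2 ^ c := by
      have := Fintype.card_le_of_injective f hinj
      simpa using this
    rcases Nat.eq_zero_or_pos n with h0 | hpos
    · simp [h0]
    · have hle : (n : ℝ) ≤ (2 : ℝ) ^ c := by exact_mod_cast hcard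
      calc Real.logb 2 n ≤ Real.logb 2 ((2 : ℝ) ^ c) :=
            Real.logb_le_logb_of_le one_lt_two (by exact_mod_cast hpos) hle
        _ = c := by
            rw [Real.logb_pow, Real.logb_self_eq_one] <;> norm_num
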